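/- Strong converse for c-q channel codes with constant composition (classical version): Let W : X → 𝒫(Y) be a channel on finite alphabets, P ∈ 𝒫_n(X) a type, and C = (E, D) an n-blocklength code with all codewords E(m) of type P and message set of size M. Then for every α > 1 and every σ ∈ 𝒫(Y), −(1/n)·log(1 − P_e(C)) ≥ ((1−α)/α)·[ ∑_x P(x)·D_α(W(·|x)‖σ) − (log M)/n ], where P_e(C) is the average error probability and D_α is the Rényi divergence of order α. -/

import Mathlib

/-- Two-sequence Hoelder: `∑ u^β v^(1-β) ≤ (∑u)^β (∑v)^(1-β)` for nonneg `u,v`, `β ∈ (0,1)`. -/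
lemma holder_aux {ι : Type*} (s : Finset ι) (u v : ι → ℝ)
    (hu : ∀ i ∈ s, 0 ≤ u i) (hv : ∀ i ∈ s, 0 ≤ v i)
    (β : ℝ) (hβ0 : 0 < β) (hβ1 : β < 1) :
    ∑ i ∈ s, u i ^ β * v i ^ (1 - β) ≤ (∑ i ∈ s, u i) ^ β * (∑ i ∈ s, v i) ^ (1 - β) := by
  set U := ∑ i ∈ s, u i with hU
  set V := ∑ i ∈ s, v i with hV
  have hUnn : 0 ≤ U := Finset.sum_nonneg hu
  have hVnn : 0 ≤ V := Finset.sum_nonneg hv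
  rcases eq_or_lt_of_le hUnn with hU0 | hUpos
  · have hzero : ∀ i ∈ s, u i = 0 := by
      intro i hi
      exact le_antisymm (by
        have := Finset.single_le_sum hu hi; linarith) (hu i hi)
    have : ∑ i ∈ s, u i ^ β * v i ^ (1 - β) = 0 := by
      apply Finset.sum_eq_zero
      intro i hi
      rw [hzero i hi, Real.zero_rpow (ne_of_gt hβ0), zero_mul]
    rw [this, ← hU0, Real.zero_rpow (ne_of_gt hβ0), zero_mul]
  rcases eq_or_lt_of_le hVnn with hV0 | hVpos
  · have hzero : ∀ i ∈ s, v i = 0 := by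
      intro i hi
      exact le_antisymm (by
        have := Finset.single_le_sum hv hi; linarith) (hv i hi)
    have : ∑ i ∈ s, u i ^ β * v i ^ (1 - β) = 0 := by
      apply Finset.sum_eq_zero
      intro i hi
      rw [hzero i hi, Real.zero_rpow (by linarith), mul_zero]
    rw [this, ← hV0, Real.zero_rpow (by linarith), mul_zero]
  have hterm : ∀ i ∈ s,
      u i ^ β * v i ^ (1 - β) ≤ (β * (u i / U) + (1 - β) * (v i / V)) * (U ^ β * V ^ (1 - β)) := by
    intro i hi
    have h1 : (u i / U) ^ β * (v i / V) ^ (1 - β) ≤ β * (u i / U) + (1 - β) * (v i / V) :=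
      Real.geom_mean_le_arith_mean2_weighted (le_of_lt hβ0) (by linarith)
        (div_nonneg (hu i hi) hUnn) (div_nonneg (hv i hi) hVnn) (by ring)
    have h2 : (u i / U) ^ β * (v i / V) ^ (1 - β) * (U ^ β * V ^ (1 - β))
        = u i ^ β * v i ^ (1 - β) := by
      rw [Real.div_rpow (hu i hi) hUnn, Real.div_rpow (hv i hi) hVnn]
      have hUβ : U ^ β ≠ 0 := ne_of_gt (Real.rpow_pos_of_pos hUpos _)
      have hVβ : V ^ (1 - β) ≠ 0 := ne_of_gt (Real.rpow_pos_of_pos hVpos _)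
      field_simp
    calc u i ^ β * v i ^ (1 - β)
        = (u i / U) ^ β * (v i / V) ^ (1 - β) * (U ^ β * V ^ (1 - β)) := h2.symm
      _ ≤ (β * (u i / U) + (1 - β) * (v i / V)) * (U ^ β * V ^ (1 - β)) := by
          apply mul_le_mul_of_nonneg_right h1
          positivity
  calc ∑ i ∈ s, u i ^ β * v i ^ (1 - β)
      ≤ ∑ i ∈ s, (β * (u i / U) + (1 - β) * (v i / V)) * (U ^ β * V ^ (1 - β)) :=
        Finset.sum_le_sum hterm
    _ = (β * (U / U) + (1 - β) * (V / V)) * (U ^ β * V ^ (1 - β)) := by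
        rw [← Finset.sum_mul]
        congr 1
        rw [Finset.sum_add_distrib, ← Finset.mul_sum, ← Finset.mul_sum,
          ← Finset.sum_div, ← Finset.sum_div]
    _ = U ^ β * V ^ (1 - β) := by
        rw [div_self (ne_of_gt hUpos), div_self (ne_of_gt hVpos)]
        ring

/-- Strong converse for channel codes with constant composition (classical version): for a
channel `W`, a constant-composition code with all codewords of type `P` (`P a = c a / n`),
`M` messages and disjoint decision regions `D m`, for every `α > 1` and distribution `σ`,
`-(1/n) log(1 - P_e) ≥ ((1-α)/α)[∑_x P(x) D_α(W(·|x)‖σ) - (log M)/n]`,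
where `1 - P_e` is the average success probability (assumed positive so that the logarithm
is the real one). -/
theorem stmt_17 {X Y : Type*} [Fintype X] [Fintype Y] [DecidableEq X]
    (n : ℕ) (hn : 0 < n)
    (W : X → Y → ℝ) (hW0 : ∀ x y, 0 ≤ W x y) (hW1 : ∀ x, ∑ y, W x y = 1)
    (c : X → ℕ) (hc : ∑ a, c a = n)
    (M : ℕ) (hM : 0 < M)
    (E : Fin M → Fin n → X)
    (hE : ∀ m a, ((Finset.univ : Finset (Fin n)).filter (fun i => E m i = a)).card = c a)
    (D : Fin M → Finset (Fin n → Y))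
    (hD : ∀ m m', m ≠ m' → Disjoint (D m) (D m'))
    (σ : Y → ℝ) (hσ : ∀ y, 0 < σ y) (hσ1 : ∑ y, σ y = 1)
    (α : ℝ) (hα : 1 < α) :
    let succ : ℝ := (1 / M) * ∑ m, ∑ y ∈ D m, ∏ i, W (E m i) (y i)
    0 < succ →
    ((1 - α) / α) * ((∑ a, ((c a : ℝ) / n) *
          ((1 / (α - 1)) * Real.log (∑ y, W a y ^ α * σ y ^ (1 - α))))
        - Real.log M / n)
      ≤ -(1 / n) * Real.log succ := by
  intro succ hsucc
  classical
  have hα0 : (0:ℝ) < α := by linarith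
  have hα1 : (0:ℝ) < α - 1 := by linarith
  have hn' : (0:ℝ) < n := by exact_mod_cast hn
  have hM' : (0:ℝ) < M := by exact_mod_cast hM
  set β : ℝ := (α - 1) / α with hβ
  have hβ0 : 0 < β := div_pos hα1 hα0
  have hβ1 : β < 1 := by rw [hβ, div_lt_one hα0]; linarith
  have h1β : 1 - 1/α = β := by rw [hβ]; field_simp
  set Z : X → ℝ := fun a => ∑ y, W a y ^ α * σ y ^ (1 - α) with hZdef
  have hZnn : ∀ a (y : Y), 0 ≤ W a y ^ α * σ y ^ (1 - α) := fun a y =>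
    mul_nonneg (Real.rpow_nonneg (hW0 a y) _) (Real.rpow_nonneg (hσ y).le _)
  have hZpos : ∀ a, 0 < Z a := by
    intro a
    obtain ⟨y0, hy0⟩ : ∃ y, 0 < W a y := by
      by_contra h
      push_neg at h
      have : ∑ y, W a y ≤ 0 := Finset.sum_nonpos (fun y _ => h y)
      rw [hW1 a] at this; linarith
    have hterm : 0 < W a y0 ^ α * σ y0 ^ (1 - α) :=
      mul_pos (Real.rpow_pos_of_pos hy0 _) (Real.rpow_pos_of_pos (hσ y0) _)
    have hle : W a y0 ^ α * σ y0 ^ (1 - α) ≤ Z a :=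
      Finset.single_le_sum (fun y _ => hZnn a y) (Finset.mem_univ y0)
    linarith
  set S : ℝ := ∏ a, Z a ^ (c a) with hSdef
  have hSpos : 0 < S := Finset.prod_pos (fun a _ => pow_pos (hZpos a) _)
  set q : Fin M → ℝ := fun m => ∑ y ∈ D m, ∏ i, σ (y i) with hqdef
  have hqnn : ∀ m, 0 ≤ q m := fun m =>
    Finset.sum_nonneg (fun y _ => Finset.prod_nonneg (fun i _ => (hσ _).le))
  -- factorization : full sum equals S
  have hfac : ∀ m, (∑ y : Fin n → Y, (∏ i, W (E m i) (y i)) ^ α * (∏ i, σ (y i)) ^ (1 - α)) = S := by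
    intro m
    have e1 : ∀ y : Fin n → Y,
        (∏ i, W (E m i) (y i)) ^ α * (∏ i, σ (y i)) ^ (1 - α)
          = ∏ i, (W (E m i) (y i) ^ α * σ (y i) ^ (1 - α)) := by
      intro y
      rw [← Real.finset_prod_rpow _ _ (fun i _ => hW0 _ _) α,
          ← Real.finset_prod_rpow _ _ (fun i _ => (hσ _).le) (1 - α),
          ← Finset.prod_mul_distrib]
    calc (∑ y : Fin n → Y, (∏ i, W (E m i) (y i)) ^ α * (∏ i, σ (y i)) ^ (1 - α))
        = ∑ y : Fin n → Y, ∏ i, (W (E m i) (y i) ^ α * σ (y i) ^ (1 - α)) :=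
          Finset.sum_congr rfl (fun y _ => e1 y)
      _ = ∏ i : Fin n, ∑ j : Y, (W (E m i) j ^ α * σ j ^ (1 - α)) := by
          rw [← Finset.sum_prod_piFinset Finset.univ
            (fun i j => W (E m i) j ^ α * σ j ^ (1 - α)), Fintype.piFinset_univ]
      _ = ∏ i : Fin n, Z (E m i) := rfl
      _ = ∏ a, ∏ i ∈ Finset.univ.filter (fun i => E m i = a), Z a :=
          (Finset.prod_fiberwise' Finset.univ (E m) Z).symm
      _ = S := by
          rw [hSdef]
          exact Finset.prod_congr rfl (fun a _ => by rw [Finset.prod_const, hE m a])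
  -- per-message bound
  have hstep : ∀ m, (∑ y ∈ D m, ∏ i, W (E m i) (y i)) ≤ S ^ (1/α) * q m ^ β := by
    intro m
    have hu : ∀ y ∈ D m, 0 ≤ (∏ i, W (E m i) (y i)) ^ α * (∏ i, σ (y i)) ^ (1 - α) :=
      fun y _ => mul_nonneg (Real.rpow_nonneg (Finset.prod_nonneg fun i _ => hW0 _ _) _)
        (Real.rpow_nonneg (Finset.prod_nonneg fun i _ => (hσ _).le) _)
    have hv : ∀ y ∈ D m, 0 ≤ ∏ i, σ (y i) :=
      fun y _ => Finset.prod_nonneg fun i _ => (hσ _).le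
    have h1α0 : 0 < 1/α := by positivity
    have h1α1 : 1/α < 1 := by rw [div_lt_one hα0]; exact hα
    have key := holder_aux (D m)
      (fun y => (∏ i, W (E m i) (y i)) ^ α * (∏ i, σ (y i)) ^ (1 - α))
      (fun y => ∏ i, σ (y i)) hu hv (1/α) h1α0 h1α1
    have hLHS : ∀ y : Fin n → Y,
        ((∏ i, W (E m i) (y i)) ^ α * (∏ i, σ (y i)) ^ (1 - α)) ^ (1/α)
            * (∏ i, σ (y i)) ^ (1 - 1/α)
          = ∏ i, W (E m i) (y i) := by
      intro y
      have hPw : 0 ≤ ∏ i, W (E m i) (y i) := Finset.prod_nonneg fun i _ => hW0 _ _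
      have hPs : 0 < ∏ i, σ (y i) := Finset.prod_pos fun i _ => hσ _
      rw [Real.mul_rpow (Real.rpow_nonneg hPw _) (Real.rpow_nonneg hPs.le _),
          ← Real.rpow_mul hPw, ← Real.rpow_mul hPs.le,
          mul_assoc, ← Real.rpow_add hPs]
      have e2 : α * (1/α) = 1 := by field_simp
      have e3 : (1 - α) * (1/α) + (1 - 1/α) = 0 := by field_simp; ring
      rw [e2, e3, Real.rpow_one, Real.rpow_zero, mul_one]
    have hsub : (∑ y ∈ D m, (∏ i, W (E m i) (y i)) ^ α * (∏ i, σ (y i)) ^ (1 - α)) ≤ S := by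
      rw [← hfac m]
      exact Finset.sum_le_sum_of_subset_of_nonneg (Finset.subset_univ _)
        (fun y _ _ => mul_nonneg
          (Real.rpow_nonneg (Finset.prod_nonneg fun i _ => hW0 _ _) _)
          (Real.rpow_nonneg (Finset.prod_nonneg fun i _ => (hσ _).le) _))
    calc (∑ y ∈ D m, ∏ i, W (E m i) (y i))
        = ∑ y ∈ D m, ((∏ i, W (E m i) (y i)) ^ α * (∏ i, σ (y i)) ^ (1 - α)) ^ (1/α)
            * (∏ i, σ (y i)) ^ (1 - 1/α) :=
          (Finset.sum_congr rfl (fun y _ => hLHS y)).symm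
      _ ≤ (∑ y ∈ D m, (∏ i, W (E m i) (y i)) ^ α * (∏ i, σ (y i)) ^ (1 - α)) ^ (1/α)
            * (q m) ^ (1 - 1/α) := key
      _ ≤ S ^ (1/α) * q m ^ β := by
          rw [h1β]
          apply mul_le_mul_of_nonneg_right _ (Real.rpow_nonneg (hqnn m) _)
          exact Real.rpow_le_rpow (Finset.sum_nonneg hu) hsub h1α0.le
  -- sum of q ≤ 1
  have hq1 : ∑ m, q m ≤ 1 := by
    have hd : ((Finset.univ : Finset (Fin M)) : Set (Fin M)).PairwiseDisjoint D :=
      fun m _ m' _ hne => hD m m' hne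
    calc ∑ m, q m
        = ∑ y ∈ Finset.univ.biUnion D, ∏ i, σ (y i) := (Finset.sum_biUnion hd).symm
      _ ≤ ∑ y : Fin n → Y, ∏ i, σ (y i) :=
          Finset.sum_le_sum_of_subset_of_nonneg (Finset.subset_univ _)
            (fun y _ _ => Finset.prod_nonneg fun i _ => (hσ _).le)
      _ = ∏ i : Fin n, ∑ j : Y, σ j := by
          rw [← Finset.sum_prod_piFinset Finset.univ (fun _ j => σ j),
            Fintype.piFinset_univ]
      _ = 1 := by simp [hσ1]
  -- sum of q^β ≤ M^(1-β)
  have hqβ : ∑ m, q m ^ β ≤ (M:ℝ) ^ (1 - β) := by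
    have key2 := holder_aux Finset.univ q (fun _ => 1) (fun m _ => hqnn m)
      (fun m _ => zero_le_one) β hβ0 hβ1
    simp only [Real.one_rpow, mul_one, Finset.sum_const, Finset.card_univ,
      Fintype.card_fin, nsmul_eq_mul] at key2
    calc ∑ m, q m ^ β ≤ (∑ m, q m) ^ β * ((M:ℝ)) ^ (1 - β) := key2
      _ ≤ 1 * ((M:ℝ)) ^ (1 - β) := by
          apply mul_le_mul_of_nonneg_right _ (Real.rpow_nonneg hM'.le _)
          exact Real.rpow_le_one (Finset.sum_nonneg fun m _ => hqnn m) hq1 hβ0.le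
      _ = (M:ℝ) ^ (1 - β) := one_mul _
  -- combine
  have hsucc_le : succ ≤ (1 / M) * (S ^ (1/α) * (M:ℝ) ^ (1 - β)) := by
    have h1 : (∑ m, ∑ y ∈ D m, ∏ i, W (E m i) (y i)) ≤ S ^ (1/α) * (M:ℝ) ^ (1 - β) := by
      calc (∑ m, ∑ y ∈ D m, ∏ i, W (E m i) (y i))
          ≤ ∑ m, S ^ (1/α) * q m ^ β := Finset.sum_le_sum (fun m _ => hstep m)
        _ = S ^ (1/α) * ∑ m, q m ^ β := by rw [Finset.mul_sum]
        _ ≤ S ^ (1/α) * (M:ℝ) ^ (1 - β) := by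
            apply mul_le_mul_of_nonneg_left hqβ (Real.rpow_nonneg hSpos.le _)
    exact mul_le_mul_of_nonneg_left h1 (by positivity)
  have hlog : Real.log succ ≤ (1/α) * Real.log S - β * Real.log M := by
    have hA : (1:ℝ)/M ≠ 0 := by positivity
    have hC : S ^ (1/α) ≠ 0 := ne_of_gt (Real.rpow_pos_of_pos hSpos _)
    have hDD : ((M:ℝ)) ^ (1 - β) ≠ 0 := ne_of_gt (Real.rpow_pos_of_pos hM' _)
    have hB : S ^ (1/α) * ((M:ℝ)) ^ (1 - β) ≠ 0 := mul_ne_zero hC hDD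
    calc Real.log succ
        ≤ Real.log ((1 / M) * (S ^ (1/α) * ((M:ℝ)) ^ (1 - β))) :=
          Real.log_le_log hsucc hsucc_le
      _ = (1/α) * Real.log S - β * Real.log M := by
          rw [Real.log_mul hA hB, Real.log_mul hC hDD, Real.log_rpow hSpos,
            Real.log_rpow hM', one_div, Real.log_inv]
          ring
  -- finish
  have hsum_eq : (∑ a, ((c a : ℝ) / n) *
        ((1 / (α - 1)) * Real.log (∑ y, W a y ^ α * σ y ^ (1 - α))))
      = (1/((n:ℝ) * (α - 1))) * Real.log S := by
    rw [hSdef, Real.log_prod (fun a _ => ne_of_gt (pow_pos (hZpos a) _)),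
        Finset.mul_sum]
    apply Finset.sum_congr rfl
    intro a _
    rw [Real.log_pow]
    field_simp
    rfl
  rw [hsum_eq]
  have hgoal_eq : ((1 - α) / α) * ((1/((n:ℝ) * (α - 1))) * Real.log S - Real.log M / n)
      = (1/(n:ℝ)) * (-((1/α) * Real.log S - β * Real.log M)) := by
    rw [hβ]
    field_simp
    ring
  rw [hgoal_eq, show -(1 / (n:ℝ)) * Real.log succ = (1/(n:ℝ)) * (-Real.log succ) by ring]
  apply mul_le_mul_of_nonneg_left _ (by positivity)
  linarith [hlog]
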